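/- arXiv:1810.01579 — 3 statements merged into one kernel-verified Lean document; each statement's English description precedes it below -/
import Mathlib

section
/- Let E be a real inner product space, θ ∈ [0, π/2), γ₁, γ₂ ∈ E unit vectors with ⟨γ₂, γ₁⟩² < 1, and set N = (cos θ · γ₁, sin θ), N' = (−sin θ · γ₁, cos θ), and n = (γ₂, 0) − cos θ · ⟨γ₂, γ₁⟩ · N in E × ℝ. Then the constant C := 1 − ⟨n/‖n‖, N'⟩² satisfies C = (1 − ⟨γ₂, γ₁⟩²) / (1 − cos²θ · ⟨γ₂, γ₁⟩²). -/
open scoped RealInnerProductSpace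

/-- The vector `N = (cos θ · γ₁, sin θ) ∈ E × ℝ`. -/
noncomputable def Nvec {E : Type*} [NormedAddCommGroup E] [InnerProductSpace ℝ E]
    (θ : ℝ) (γ₁ : E) : WithLp 2 (E × ℝ) :=
  (WithLp.equiv 2 (E × ℝ)).symm (Real.cos θ • γ₁, Real.sin θ)

/-- The vector `N' = (−sin θ · γ₁, cos θ) ∈ E × ℝ`. -/
noncomputable def Nvec' {E : Type*} [NormedAddCommGroup E] [InnerProductSpace ℝ E]
    (θ : ℝ) (γ₁ : E) : WithLp 2 (E × ℝ) :=
  (WithLp.equiv 2 (E × ℝ)).symm (-(Real.sin θ) • γ₁, Real.cos θ)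

/-- The vector `n = (γ₂, 0) − cos θ · ⟨γ₂, γ₁⟩ · N`. -/
noncomputable def nvec {E : Type*} [NormedAddCommGroup E] [InnerProductSpace ℝ E]
    (θ : ℝ) (γ₁ γ₂ : E) : WithLp 2 (E × ℝ) :=
  (WithLp.equiv 2 (E × ℝ)).symm (γ₂, 0) - (Real.cos θ * ⟪γ₂, γ₁⟫) • Nvec θ γ₁

/-- `C := 1 − ⟨n/‖n‖, N'⟩²` equals
`(1 − ⟨γ₂, γ₁⟩²) / (1 − cos²θ · ⟨γ₂, γ₁⟩²)`. -/
theorem stmt8 {E : Type*} [NormedAddCommGroup E] [InnerProductSpace ℝ E]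
    (θ : ℝ) (hθ : θ ∈ Set.Ico 0 (Real.pi / 2)) (γ₁ γ₂ : E)
    (hγ₁ : ‖γ₁‖ = 1) (hγ₂ : ‖γ₂‖ = 1) (htrans : ⟪γ₂, γ₁⟫ ^ 2 < 1) :
    1 - ⟪‖nvec θ γ₁ γ₂‖⁻¹ • nvec θ γ₁ γ₂, Nvec' θ γ₁⟫ ^ 2 =
      (1 - ⟪γ₂, γ₁⟫ ^ 2) / (1 - (Real.cos θ) ^ 2 * ⟪γ₂, γ₁⟫ ^ 2) := by
  have hpos : 0 < 1 - Real.cos θ ^ 2 * ⟪γ₂, γ₁⟫ ^ 2 := by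
    nlinarith [Real.cos_sq_le_one θ, sq_nonneg ⟪γ₂, γ₁⟫, Real.sin_sq_add_cos_sq θ,
      sq_nonneg (Real.sin θ * ⟪γ₂, γ₁⟫)]
  have hg1 : ⟪γ₁, γ₁⟫ = 1 := by
    rw [real_inner_self_eq_norm_sq, hγ₁]; norm_num
  have hg2 : ⟪γ₂, γ₂⟫ = 1 := by
    rw [real_inner_self_eq_norm_sq, hγ₂]; norm_num
  have hsym : ⟪γ₁, γ₂⟫ = ⟪γ₂, γ₁⟫ := real_inner_comm _ _
  have hinner : ⟪nvec θ γ₁ γ₂, Nvec' θ γ₁⟫ = -(Real.sin θ) * ⟪γ₂, γ₁⟫ := by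
    simp only [nvec, Nvec, Nvec', inner_sub_left, real_inner_smul_left,
      WithLp.prod_inner_apply, WithLp.equiv_symm_apply, WithLp.ofLp_toLp,
      real_inner_smul_left, real_inner_smul_right, hg1, hsym, RCLike.inner_apply,
      conj_trivial, WithLp.ofLp_smul, Prod.smul_fst, Prod.smul_snd, smul_eq_mul]
    ring
  have hnorm : ‖nvec θ γ₁ γ₂‖ ^ 2 = 1 - Real.cos θ ^ 2 * ⟪γ₂, γ₁⟫ ^ 2 := by
    rw [← real_inner_self_eq_norm_sq]
    simp only [nvec, Nvec, inner_sub_left, inner_sub_right, real_inner_smul_left,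
      real_inner_smul_right, WithLp.prod_inner_apply, WithLp.equiv_symm_apply,
      WithLp.ofLp_toLp, hg1, hg2, hsym, RCLike.inner_apply, conj_trivial,
      WithLp.ofLp_smul, Prod.smul_fst, Prod.smul_snd, smul_eq_mul]
    have := Real.sin_sq_add_cos_sq θ
    nlinarith [this]
  have hn : ‖nvec θ γ₁ γ₂‖ ≠ 0 := by
    intro h
    rw [h] at hnorm
    simp at hnorm
    nlinarith
  rw [real_inner_smul_left, hinner]
  have hsc := Real.sin_sq_add_cos_sq θ
  have : (‖nvec θ γ₁ γ₂‖⁻¹) ^ 2 = (1 - Real.cos θ ^ 2 * ⟪γ₂, γ₁⟫ ^ 2)⁻¹ := by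
    rw [← hnorm]; simp [inv_pow]
  rw [mul_pow, this]
  field_simp
  nlinarith [hsc]
end

section
/- Let E be a real inner product space, θ ∈ [0, π/2), γ₁, γ₂ ∈ E unit vectors with ⟨γ₂, γ₁⟩² < 1, and set N = (cos θ · γ₁, sin θ), N' = (−sin θ · γ₁, cos θ), and n = (γ₂, 0) − cos θ · ⟨γ₂, γ₁⟩ · N in E × ℝ. Then 1 − ⟨n/‖n‖, N'⟩² ≥ 1 − ⟨γ₂, γ₁⟩² > 0; in particular, the quantity C = 1 − ⟨n/‖n‖, N'⟩² is bounded below by a positive constant independent of θ. -/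
open scoped RealInnerProductSpace

/-- `1 − ⟨n/‖n‖, N'⟩² ≥ 1 − ⟨γ₂, γ₁⟩² > 0`: the quantity
`C = 1 − ⟨n/‖n‖, N'⟩²` is bounded below by a positive constant independent of `θ`. -/
theorem stmt9 {E : Type*} [NormedAddCommGroup E] [InnerProductSpace ℝ E]
    (θ : ℝ) (hθ : θ ∈ Set.Ico 0 (Real.pi / 2)) (γ₁ γ₂ : E)
    (hγ₁ : ‖γ₁‖ = 1) (hγ₂ : ‖γ₂‖ = 1) (htrans : ⟪γ₂, γ₁⟫ ^ 2 < 1) :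
    1 - ⟪‖nvec θ γ₁ γ₂‖⁻¹ • nvec θ γ₁ γ₂, Nvec' θ γ₁⟫ ^ 2 ≥ 1 - ⟪γ₂, γ₁⟫ ^ 2 ∧
    (0 : ℝ) < 1 - ⟪γ₂, γ₁⟫ ^ 2 := by
  have hpos : (0:ℝ) < 1 - ⟪γ₂, γ₁⟫ ^ 2 := by linarith
  refine ⟨?_, hpos⟩
  set t := ⟪γ₂, γ₁⟫ with ht
  have hcs : Real.cos θ ^ 2 + Real.sin θ ^ 2 = 1 := by
    rw [add_comm]; exact Real.sin_sq_add_cos_sq θ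
  have h1 : ⟪γ₁, γ₁⟫ = 1 := by
    rw [real_inner_self_eq_norm_sq, hγ₁]; norm_num
  have h2 : ⟪γ₂, γ₂⟫ = 1 := by
    rw [real_inner_self_eq_norm_sq, hγ₂]; norm_num
  have hsym : ⟪γ₁, γ₂⟫ = t := real_inner_comm _ _
  have hinner : ⟪nvec θ γ₁ γ₂, Nvec' θ γ₁⟫ = -(Real.sin θ * t) := by
    simp only [nvec, Nvec, Nvec', WithLp.prod_inner_apply, inner_sub_left,
      real_inner_smul_left, real_inner_smul_right, WithLp.equiv_symm_apply,
      WithLp.ofLp_toLp, WithLp.ofLp_smul, Prod.smul_fst, Prod.smul_snd, WithLp.smul_fst, WithLp.smul_snd, smul_eq_mul, h1, hsym, RCLike.inner_apply, conj_trivial]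
    ring
  have hnorm : ‖nvec θ γ₁ γ₂‖ ^ 2 = 1 - Real.cos θ ^ 2 * t ^ 2 := by
    rw [← real_inner_self_eq_norm_sq]
    simp only [nvec, Nvec, WithLp.prod_inner_apply, inner_sub_left, inner_sub_right,
      real_inner_smul_left, real_inner_smul_right, WithLp.equiv_symm_apply,
      WithLp.ofLp_toLp, WithLp.ofLp_smul, Prod.smul_fst, Prod.smul_snd, WithLp.smul_fst, WithLp.smul_snd, smul_eq_mul, h1, h2, hsym, ← ht, RCLike.inner_apply, conj_trivial]
    nlinarith [hcs]
  have hd : (0:ℝ) < 1 - Real.cos θ ^ 2 * t ^ 2 := by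
    nlinarith [Real.cos_sq_le_one θ]
  rw [real_inner_smul_left, hinner]
  have hn2 : (‖nvec θ γ₁ γ₂‖⁻¹) ^ 2 = (1 - Real.cos θ ^ 2 * t ^ 2)⁻¹ := by
    rw [← hnorm]; rw [inv_pow]
  have key : (‖nvec θ γ₁ γ₂‖⁻¹ * -(Real.sin θ * t)) ^ 2 ≤ t ^ 2 := by
    rw [mul_pow, hn2, neg_pow, mul_pow]
    rw [inv_mul_le_iff₀ hd]
    nlinarith [sq_nonneg (Real.cos θ * t), hcs, sq_nonneg t, sq_nonneg (Real.cos θ)]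
  linarith
end

section
/- Let E be a real inner product space, θ ∈ [0, π/2), γ₁ ∈ E a unit vector, and γ₂, γ₃ ∈ E with ⟨γ₂, γ₁⟩ < 0, ⟨γ₃, γ₁⟩ < 0, and ⟨γ₂, γ₃⟩ < 0. Set N = (cos θ · γ₁, sin θ) ∈ E × ℝ and π*(v) = (v, 0) − cos θ · ⟨v, γ₁⟩ · N. Then ⟨π*(γ₂), π*(γ₃)⟩ ≤ ⟨γ₂, γ₃⟩ < 0. (That is, acute dihedral angles are preserved by the doubling construction: if the faces normal to γ₂ and γ₃ meet the doubled face at acute angles and meet each other at an acute angle, then their lifts to the doubled manifold still meet at an acute angle.) -/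
open scoped RealInnerProductSpace

/-- The map `π*(v) = (v,0) − cos θ · ⟨v, γ₁⟩ · N`. -/
noncomputable def piStar {E : Type*} [NormedAddCommGroup E] [InnerProductSpace ℝ E]
    (θ : ℝ) (γ₁ : E) (v : E) : WithLp 2 (E × ℝ) :=
  (WithLp.equiv 2 (E × ℝ)).symm (v, 0) - (Real.cos θ * ⟪v, γ₁⟫) • Nvec θ γ₁

/-- Acute dihedral angles are preserved by the doubling construction:
if `⟨γ₂, γ₁⟩ < 0`, `⟨γ₃, γ₁⟩ < 0` and `⟨γ₂, γ₃⟩ < 0`, then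
`⟨π*(γ₂), π*(γ₃)⟩ ≤ ⟨γ₂, γ₃⟩ < 0`. -/
theorem stmt11 {E : Type*} [NormedAddCommGroup E] [InnerProductSpace ℝ E]
    (θ : ℝ) (hθ : θ ∈ Set.Ico 0 (Real.pi / 2)) (γ₁ : E) (hγ₁ : ‖γ₁‖ = 1) (γ₂ γ₃ : E)
    (h21 : ⟪γ₂, γ₁⟫ < 0) (h31 : ⟪γ₃, γ₁⟫ < 0) (h23 : ⟪γ₂, γ₃⟫ < 0) :
    ⟪piStar θ γ₁ γ₂, piStar θ γ₁ γ₃⟫ ≤ ⟪γ₂, γ₃⟫ ∧ ⟪γ₂, γ₃⟫ < 0 := by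
  have h11 : ⟪γ₁, γ₁⟫ = 1 := by
    rw [real_inner_self_eq_norm_sq, hγ₁]; norm_num
  have hs : Real.sin θ ^ 2 + Real.cos θ ^ 2 = 1 := Real.sin_sq_add_cos_sq θ
  have key : ⟪piStar θ γ₁ γ₂, piStar θ γ₁ γ₃⟫
      = ⟪γ₂, γ₃⟫ - (Real.cos θ)^2 * (⟪γ₂, γ₁⟫ * ⟪γ₃, γ₁⟫) := by
    simp only [piStar, Nvec, inner_sub_left, inner_sub_right, real_inner_smul_left,
      real_inner_smul_right, WithLp.prod_inner_apply, WithLp.equiv_symm_apply, WithLp.toLp_fst,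
      WithLp.toLp_snd, real_inner_comm γ₁]
    simp [h11, hγ₁, real_inner_smul_left, real_inner_smul_right, real_inner_comm γ₁]
    linear_combination (Real.cos θ)^2 * ⟪γ₁, γ₂⟫ * ⟪γ₁, γ₃⟫ * hs
  refine ⟨?_, h23⟩
  rw [key]
  nlinarith [mul_pos_of_neg_of_neg h21 h31, sq_nonneg (Real.cos θ)]
end
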